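/- Let n ≥ 3 and x, y : Fin n → Bool. Then the graph H_{x,y} is connected if and only if |x ∧ y| is odd. -/

import Mathlib

/-- Cyclic successor on `Fin n`. -/
def cycSucc {n : ℕ} (i : Fin n) : Fin n := ⟨(i.val + 1) % n, Nat.mod_lt _ i.pos⟩

/-- The graph `H_{x,y}` on the `10n` vertices `Fin n × Fin 10`, where for `i : Fin n` the
vertex `(i, 0)` is `t_i`, `(i, 1)` is `b_i`, `(i, 2)` is `k_i^{tt}`, `(i, 3)` is `ℓ_i^{tt}`,
`(i, 4)` is `k_i^{bb}`, `(i, 5)` is `ℓ_i^{bb}`, `(i, 6)` is `k_i^{tb}`, `(i, 7)` is `ℓ_i^{tb}`,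
`(i, 8)` is `k_i^{bt}`, and `(i, 9)` is `ℓ_i^{bt}`.  The edges (indices mod `n`) are:
top horizontal gadget `{k_i^{tt}, t_{i+1}}`, `{ℓ_i^{tt}, t_{i+1}}` always, `{t_i, k_i^{tt}}` if
`x i = false`, `{t_i, ℓ_i^{tt}}` if `y i = false`; the analogous bottom horizontal gadget;
top-to-bottom diagonal gadget `{t_i, k_i^{tb}}` always, `{t_i, ℓ_i^{tb}}` if `x i = true`,
`{k_i^{tb}, ℓ_i^{tb}}` if `y i = false`, `{ℓ_i^{tb}, b_{i+1}}` if `y i = true`; and the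
analogous bottom-to-top diagonal gadget. -/
def Hxy (n : ℕ) (x y : Fin n → Bool) : SimpleGraph (Fin n × Fin 10) :=
  SimpleGraph.fromEdgeSet { e | ∃ i : Fin n,
    -- top horizontal gadget
    e = s((i, 2), (cycSucc i, 0)) ∨ e = s((i, 3), (cycSucc i, 0)) ∨
    (x i = false ∧ e = s((i, 0), (i, 2))) ∨ (y i = false ∧ e = s((i, 0), (i, 3))) ∨
    -- bottom horizontal gadget
    e = s((i, 4), (cycSucc i, 1)) ∨ e = s((i, 5), (cycSucc i, 1)) ∨
    (x i = false ∧ e = s((i, 1), (i, 4))) ∨ (y i = false ∧ e = s((i, 1), (i, 5))) ∨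
    -- top-to-bottom diagonal gadget
    e = s((i, 0), (i, 6)) ∨ (x i = true ∧ e = s((i, 0), (i, 7))) ∨
    (y i = false ∧ e = s((i, 6), (i, 7))) ∨ (y i = true ∧ e = s((i, 7), (cycSucc i, 1))) ∨
    -- bottom-to-top diagonal gadget
    e = s((i, 1), (i, 8)) ∨ (x i = true ∧ e = s((i, 1), (i, 9))) ∨
    (y i = false ∧ e = s((i, 8), (i, 9))) ∨ (y i = true ∧ e = s((i, 9), (cycSucc i, 0))) }

namespace HP

/-- parity of #{j < m | s j} -/
def q (s : ℕ → Bool) (m : ℕ) : Bool := ((Finset.range m).filter (fun j => s j = true)).card.bodd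

lemma q_zero (s : ℕ → Bool) : q s 0 = false := by simp [q]

lemma q_succ (s : ℕ → Bool) (m : ℕ) : q s (m+1) = (q s m ^^ s m) := by
  unfold q
  rw [Finset.range_add_one, Finset.filter_insert]
  cases h : s m <;>
    simp [h, Finset.card_insert_of_notMem, Nat.bodd_succ]

def sw (n : ℕ) (hn : 0 < n) (x y : Fin n → Bool) (j : ℕ) : Bool :=
  x ⟨j % n, Nat.mod_lt _ hn⟩ && y ⟨j % n, Nat.mod_lt _ hn⟩

lemma sw_val {n : ℕ} (hn : 0 < n) (x y : Fin n → Bool) (i : Fin n) :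
    sw n hn x y i.val = (x i && y i) := by
  simp only [sw]
  congr 1 <;> congr 1 <;> exact Fin.ext (Nat.mod_eq_of_lt i.isLt)

lemma sw_add_n {n : ℕ} (hn : 0 < n) (x y : Fin n → Bool) (j : ℕ) :
    sw n hn x y (j + n) = sw n hn x y j := by
  simp [sw, Nat.add_mod_right]

lemma bodd_true_iff_odd (k : ℕ) : k.bodd = true ↔ Odd k := by
  rw [Nat.odd_iff, Nat.mod_two_of_bodd]; cases k.bodd <;> simp

lemma q_n_true_iff {n : ℕ} (hn : 0 < n) (x y : Fin n → Bool) :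
    q (sw n hn x y) n = true ↔
      Odd (Finset.univ.filter fun i : Fin n => x i = true ∧ y i = true).card := by
  have hcard : ((Finset.range n).filter (fun j => sw n hn x y j = true)).card
      = (Finset.univ.filter fun i : Fin n => x i = true ∧ y i = true).card := by
    rw [Finset.card_filter, Finset.card_filter]
    rw [← Fin.sum_univ_eq_sum_range (fun j => if sw n hn x y j = true then 1 else 0) n]
    refine Finset.sum_congr rfl fun i _ => ?_
    rw [sw_val]
    cases hx : x i <;> cases hy : y i <;> simp [hx, hy]
  unfold q
  rw [hcard, bodd_true_iff_odd]

lemma q_shift {n : ℕ} (hn : 0 < n) (x y : Fin n → Bool)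
    (hodd : q (sw n hn x y) n = true) :
    ∀ m, q (sw n hn x y) (m + n) = !(q (sw n hn x y) m) := by
  intro m
  induction m with
  | zero => rw [Nat.zero_add, hodd, q_zero]; rfl
  | succ m ih =>
    have h : m + 1 + n = (m + n) + 1 := by omega
    rw [h, q_succ, ih, sw_add_n, q_succ]
    cases q (sw n hn x y) m <;> cases sw n hn x y m <;> rfl

lemma hrec_even {n : ℕ} (hn : 0 < n) (x y : Fin n → Bool)
    (heven : q (sw n hn x y) n = false) (i : Fin n) :
    q (sw n hn x y) (cycSucc i).val = (q (sw n hn x y) i.val ^^ (x i && y i)) := by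
  by_cases h : i.val + 1 < n
  · have h1 : (cycSucc i).val = i.val + 1 := Nat.mod_eq_of_lt h
    rw [h1, q_succ, sw_val]
  · have hiv : i.val + 1 = n := by have := i.isLt; omega
    have h1 : (cycSucc i).val = 0 := by
      show (i.val + 1) % n = 0
      rw [hiv, Nat.mod_self]
    have h2 := q_succ (sw n hn x y) i.val
    rw [sw_val, hiv, heven] at h2
    rw [h1, q_zero]
    exact h2

/-! ### The coloring invariant -/

def color {n : ℕ} (y p : Fin n → Bool) : Fin n × Fin 10 → Bool :=
  fun v =>
    match v.2.val with
    | 0 => p v.1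
    | 1 => !(p v.1)
    | 2 => p (cycSucc v.1)
    | 3 => p (cycSucc v.1)
    | 4 => !(p (cycSucc v.1))
    | 5 => !(p (cycSucc v.1))
    | 6 => p v.1
    | 7 => bif y v.1 then !(p (cycSucc v.1)) else p v.1
    | 8 => !(p v.1)
    | _ => bif y v.1 then p (cycSucc v.1) else !(p v.1)

section ColorLemmas
variable {n : ℕ} {y p : Fin n → Bool}

lemma color0 (i : Fin n) : color y p (i, 0) = p i := rfl
lemma color1 (i : Fin n) : color y p (i, 1) = !(p i) := rfl
lemma color2 (i : Fin n) : color y p (i, 2) = p (cycSucc i) := rfl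
lemma color3 (i : Fin n) : color y p (i, 3) = p (cycSucc i) := rfl
lemma color4 (i : Fin n) : color y p (i, 4) = !(p (cycSucc i)) := rfl
lemma color5 (i : Fin n) : color y p (i, 5) = !(p (cycSucc i)) := rfl
lemma color6 (i : Fin n) : color y p (i, 6) = p i := rfl
lemma color7 (i : Fin n) : color y p (i, 7) = (bif y i then !(p (cycSucc i)) else p i) := rfl
lemma color8 (i : Fin n) : color y p (i, 8) = !(p i) := rfl
lemma color9 (i : Fin n) : color y p (i, 9) = (bif y i then p (cycSucc i) else !(p i)) := rfl

end ColorLemmas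

lemma color_adj {n : ℕ} (x y : Fin n → Bool) (p : Fin n → Bool)
    (hrec : ∀ i : Fin n, p (cycSucc i) = (p i ^^ (x i && y i))) :
    ∀ u v, (Hxy n x y).Adj u v → color y p u = color y p v := by
  intro u v h
  unfold Hxy at h
  rw [SimpleGraph.fromEdgeSet_adj] at h
  obtain ⟨⟨i, hc⟩, -⟩ := h
  have hr := hrec i
  rcases hc with h|h|⟨hs,h⟩|⟨hs,h⟩|h|h|⟨hs,h⟩|⟨hs,h⟩|h|⟨hs,h⟩|⟨hs,h⟩|⟨hs,h⟩|h|⟨hs,h⟩|⟨hs,h⟩|⟨hs,h⟩ <;>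
    rw [Sym2.eq_iff] at h <;>
    rcases h with ⟨rfl, rfl⟩|⟨rfl, rfl⟩ <;>
    simp only [color0, color1, color2, color3, color4, color5, color6, color7, color8, color9,
      hr] <;>
    first
      | rfl
      | (cases hxv : x i <;> cases hyv : y i <;> simp_all)

lemma reach_invariant {V : Type*} {G : SimpleGraph V} {f : V → Bool}
    (hf : ∀ u v, G.Adj u v → f u = f v) {u v : V} (h : G.Reachable u v) : f u = f v := by
  obtain ⟨w⟩ := h
  induction w with
  | nil => rfl
  | cons h' _ ih => exact (hf _ _ h').trans ih

/-! ### Adjacency constructors -/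

section Adj
variable {n : ℕ} (x y : Fin n → Bool)

lemma adjA1 (i : Fin n) : (Hxy n x y).Adj (i, 2) (cycSucc i, 0) := by
  unfold Hxy; rw [SimpleGraph.fromEdgeSet_adj]; exact ⟨⟨i, Or.inl rfl⟩, by simp⟩
lemma adjA2 (i : Fin n) : (Hxy n x y).Adj (i, 3) (cycSucc i, 0) := by
  unfold Hxy; rw [SimpleGraph.fromEdgeSet_adj]; exact ⟨⟨i, Or.inr (Or.inl rfl)⟩, by simp⟩
lemma adjA5 (i : Fin n) : (Hxy n x y).Adj (i, 4) (cycSucc i, 1) := by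
  unfold Hxy; rw [SimpleGraph.fromEdgeSet_adj]; exact ⟨⟨i, Or.inr (Or.inr (Or.inr (Or.inr (Or.inl rfl))))⟩, by simp⟩
lemma adjA6 (i : Fin n) : (Hxy n x y).Adj (i, 5) (cycSucc i, 1) := by
  unfold Hxy; rw [SimpleGraph.fromEdgeSet_adj]; exact ⟨⟨i, Or.inr (Or.inr (Or.inr (Or.inr (Or.inr (Or.inl rfl)))))⟩, by simp⟩
lemma adjA9 (i : Fin n) : (Hxy n x y).Adj (i, 0) (i, 6) := by
  unfold Hxy; rw [SimpleGraph.fromEdgeSet_adj]; exact ⟨⟨i, Or.inr (Or.inr (Or.inr (Or.inr (Or.inr (Or.inr (Or.inr (Or.inr (Or.inl rfl))))))))⟩, by simp⟩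
lemma adjA13 (i : Fin n) : (Hxy n x y).Adj (i, 1) (i, 8) := by
  unfold Hxy; rw [SimpleGraph.fromEdgeSet_adj]; exact ⟨⟨i, Or.inr (Or.inr (Or.inr (Or.inr (Or.inr (Or.inr (Or.inr (Or.inr (Or.inr (Or.inr (Or.inr (Or.inr (Or.inl rfl))))))))))))⟩, by simp⟩

variable {x y}

lemma adjA3 {i : Fin n} (h : x i = false) : (Hxy n x y).Adj (i, 0) (i, 2) := by
  unfold Hxy; rw [SimpleGraph.fromEdgeSet_adj]; exact ⟨⟨i, Or.inr (Or.inr (Or.inl ⟨h, rfl⟩))⟩, by simp⟩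
lemma adjA4 {i : Fin n} (h : y i = false) : (Hxy n x y).Adj (i, 0) (i, 3) := by
  unfold Hxy; rw [SimpleGraph.fromEdgeSet_adj]; exact ⟨⟨i, Or.inr (Or.inr (Or.inr (Or.inl ⟨h, rfl⟩)))⟩, by simp⟩
lemma adjA7 {i : Fin n} (h : x i = false) : (Hxy n x y).Adj (i, 1) (i, 4) := by
  unfold Hxy; rw [SimpleGraph.fromEdgeSet_adj]; exact ⟨⟨i, Or.inr (Or.inr (Or.inr (Or.inr (Or.inr (Or.inr (Or.inl ⟨h, rfl⟩))))))⟩, by simp⟩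
lemma adjA8 {i : Fin n} (h : y i = false) : (Hxy n x y).Adj (i, 1) (i, 5) := by
  unfold Hxy; rw [SimpleGraph.fromEdgeSet_adj]; exact ⟨⟨i, Or.inr (Or.inr (Or.inr (Or.inr (Or.inr (Or.inr (Or.inr (Or.inl ⟨h, rfl⟩)))))))⟩, by simp⟩
lemma adjA10 {i : Fin n} (h : x i = true) : (Hxy n x y).Adj (i, 0) (i, 7) := by
  unfold Hxy; rw [SimpleGraph.fromEdgeSet_adj]; exact ⟨⟨i, Or.inr (Or.inr (Or.inr (Or.inr (Or.inr (Or.inr (Or.inr (Or.inr (Or.inr (Or.inl ⟨h, rfl⟩)))))))))⟩, by simp⟩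
lemma adjA11 {i : Fin n} (h : y i = false) : (Hxy n x y).Adj (i, 6) (i, 7) := by
  unfold Hxy; rw [SimpleGraph.fromEdgeSet_adj]; exact ⟨⟨i, Or.inr (Or.inr (Or.inr (Or.inr (Or.inr (Or.inr (Or.inr (Or.inr (Or.inr (Or.inr (Or.inl ⟨h, rfl⟩))))))))))⟩, by simp⟩
lemma adjA12 {i : Fin n} (h : y i = true) : (Hxy n x y).Adj (i, 7) (cycSucc i, 1) := by
  unfold Hxy; rw [SimpleGraph.fromEdgeSet_adj]; exact ⟨⟨i, Or.inr (Or.inr (Or.inr (Or.inr (Or.inr (Or.inr (Or.inr (Or.inr (Or.inr (Or.inr (Or.inr (Or.inl ⟨h, rfl⟩)))))))))))⟩, by simp⟩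
lemma adjA14 {i : Fin n} (h : x i = true) : (Hxy n x y).Adj (i, 1) (i, 9) := by
  unfold Hxy; rw [SimpleGraph.fromEdgeSet_adj]; exact ⟨⟨i, Or.inr (Or.inr (Or.inr (Or.inr (Or.inr (Or.inr (Or.inr (Or.inr (Or.inr (Or.inr (Or.inr (Or.inr (Or.inr (Or.inl ⟨h, rfl⟩)))))))))))))⟩, by simp⟩
lemma adjA15 {i : Fin n} (h : y i = false) : (Hxy n x y).Adj (i, 8) (i, 9) := by
  unfold Hxy; rw [SimpleGraph.fromEdgeSet_adj]; exact ⟨⟨i, Or.inr (Or.inr (Or.inr (Or.inr (Or.inr (Or.inr (Or.inr (Or.inr (Or.inr (Or.inr (Or.inr (Or.inr (Or.inr (Or.inr (Or.inl ⟨h, rfl⟩))))))))))))))⟩, by simp⟩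
lemma adjA16 {i : Fin n} (h : y i = true) : (Hxy n x y).Adj (i, 9) (cycSucc i, 0) := by
  unfold Hxy; rw [SimpleGraph.fromEdgeSet_adj]; exact ⟨⟨i, Or.inr (Or.inr (Or.inr (Or.inr (Or.inr (Or.inr (Or.inr (Or.inr (Or.inr (Or.inr (Or.inr (Or.inr (Or.inr (Or.inr (Or.inr ⟨h, rfl⟩))))))))))))))⟩, by simp⟩

end Adj

/-! ### The core walk -/

def Vt (n : ℕ) (hn : 0 < n) (x y : Fin n → Bool) (m : ℕ) : Fin n × Fin 10 :=
  (⟨m % n, Nat.mod_lt _ hn⟩, bif q (sw n hn x y) m then 1 else 0)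

lemma Vt_zero {n : ℕ} (hn : 0 < n) (x y : Fin n → Bool) :
    Vt n hn x y 0 = (⟨0, hn⟩, 0) := by
  simp [Vt, Nat.zero_mod, q_zero]

lemma step_reach {n : ℕ} (hn : 0 < n) (hn1 : 1 < n) (x y : Fin n → Bool) (m : ℕ) :
    (Hxy n x y).Reachable (Vt n hn x y m) (Vt n hn x y (m+1)) := by
  set i : Fin n := ⟨m % n, Nat.mod_lt _ hn⟩ with hi
  have hcs : cycSucc i = ⟨(m+1) % n, Nat.mod_lt _ hn⟩ := by
    apply Fin.ext
    show (m % n + 1) % n = (m + 1) % n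
    conv_rhs => rw [Nat.add_mod]
    rw [Nat.mod_eq_of_lt hn1]
  have hsv : sw n hn x y m = (x i && y i) := rfl
  show (Hxy n x y).Reachable (i, bif q (sw n hn x y) m then 1 else 0)
    (⟨(m+1) % n, Nat.mod_lt _ hn⟩, bif q (sw n hn x y) (m+1) then 1 else 0)
  rw [← hcs, q_succ, hsv]
  cases hx : x i <;> cases hy : y i <;> cases hq : q (sw n hn x y) m
  · exact (adjA3 hx).reachable.trans (adjA1 x y i).reachable
  · exact (adjA7 hx).reachable.trans (adjA5 x y i).reachable
  · exact (adjA3 hx).reachable.trans (adjA1 x y i).reachable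
  · exact (adjA7 hx).reachable.trans (adjA5 x y i).reachable
  · exact (adjA4 hy).reachable.trans (adjA2 x y i).reachable
  · exact (adjA8 hy).reachable.trans (adjA6 x y i).reachable
  · exact (adjA10 hx).reachable.trans (adjA12 hy).reachable
  · exact (adjA14 hx).reachable.trans (adjA16 hy).reachable

lemma reach_from_zero {n : ℕ} (hn : 0 < n) (hn1 : 1 < n) (x y : Fin n → Bool) (m : ℕ) :
    (Hxy n x y).Reachable (⟨0, hn⟩, 0) (Vt n hn x y m) := by
  induction m with
  | zero => rw [Vt_zero]
  | succ m ih => exact ih.trans (step_reach hn hn1 x y m)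

lemma reach_core {n : ℕ} (hn : 0 < n) (hn1 : 1 < n) (x y : Fin n → Bool)
    (hodd : q (sw n hn x y) n = true) (i : Fin n) :
    (Hxy n x y).Reachable (⟨0, hn⟩, 0) (i, 0) ∧
    (Hxy n x y).Reachable (⟨0, hn⟩, 0) (i, 1) := by
  have h1 := reach_from_zero hn hn1 x y i.val
  have h2 := reach_from_zero hn hn1 x y (i.val + n)
  have e0 : (⟨i.val % n, Nat.mod_lt _ hn⟩ : Fin n) = i := Fin.ext (Nat.mod_eq_of_lt i.isLt)
  have e0' : (⟨(i.val + n) % n, Nat.mod_lt _ hn⟩ : Fin n) = i := by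
    apply Fin.ext
    show (i.val + n) % n = i.val
    rw [Nat.add_mod_right, Nat.mod_eq_of_lt i.isLt]
  have e1 : Vt n hn x y i.val = (i, bif q (sw n hn x y) i.val then 1 else 0) := by
    simp only [Vt, e0]
  have e2 : Vt n hn x y (i.val + n) = (i, bif !(q (sw n hn x y) i.val) then 1 else 0) := by
    simp only [Vt, e0', q_shift hn x y hodd]
  rw [e1] at h1
  rw [e2] at h2
  cases hq : q (sw n hn x y) i.val <;> rw [hq] at h1 h2
  · exact ⟨h1, h2⟩
  · exact ⟨h2, h1⟩

end HP

theorem Hxy_connected_iff_odd (n : ℕ) (hn : 3 ≤ n) (x y : Fin n → Bool) :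
    (Hxy n x y).Connected ↔
      Odd (Finset.univ.filter fun i => x i = true ∧ y i = true).card := by
  have hn0 : 0 < n := by omega
  have hn1 : 1 < n := by omega
  constructor
  · intro hconn
    by_contra hodd
    have hqn : HP.q (HP.sw n hn0 x y) n = false := by
      rcases Bool.eq_false_or_eq_true (HP.q (HP.sw n hn0 x y) n) with h | h
      · exact absurd ((HP.q_n_true_iff hn0 x y).mp h) hodd
      · exact h
    have hca := HP.color_adj x y (fun i : Fin n => HP.q (HP.sw n hn0 x y) i.val)
      (fun i => HP.hrec_even hn0 x y hqn i)
    have hreach : (Hxy n x y).Reachable (⟨0, hn0⟩, 0) (⟨0, hn0⟩, 1) :=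
      hconn.preconnected _ _
    have := HP.reach_invariant hca hreach
    rw [HP.color0, HP.color1] at this
    revert this
    cases HP.q (HP.sw n hn0 x y) (⟨0, hn0⟩ : Fin n).val <;> simp
  · intro hodd
    have hqn : HP.q (HP.sw n hn0 x y) n = true := (HP.q_n_true_iff hn0 x y).mpr hodd
    have hcore := HP.reach_core hn0 hn1 x y hqn
    have hall : ∀ v, (Hxy n x y).Reachable (⟨0, hn0⟩, 0) v := by
      rintro ⟨i, j⟩
      fin_cases j
      · exact (hcore i).1
      · exact (hcore i).2
      · exact (hcore (cycSucc i)).1.trans (HP.adjA1 x y i).reachable.symm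
      · exact (hcore (cycSucc i)).1.trans (HP.adjA2 x y i).reachable.symm
      · exact (hcore (cycSucc i)).2.trans (HP.adjA5 x y i).reachable.symm
      · exact (hcore (cycSucc i)).2.trans (HP.adjA6 x y i).reachable.symm
      · exact (hcore i).1.trans (HP.adjA9 x y i).reachable
      · cases hx : x i with
        | true => exact (hcore i).1.trans (HP.adjA10 hx).reachable
        | false =>
          cases hy : y i with
          | true => exact (hcore (cycSucc i)).2.trans (HP.adjA12 hy).reachable.symm
          | false =>
            exact (hcore i).1.trans
              ((HP.adjA9 x y i).reachable.trans (HP.adjA11 hy).reachable)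
      · exact (hcore i).2.trans (HP.adjA13 x y i).reachable
      · cases hx : x i with
        | true => exact (hcore i).2.trans (HP.adjA14 hx).reachable
        | false =>
          cases hy : y i with
          | true => exact (hcore (cycSucc i)).1.trans (HP.adjA16 hy).reachable.symm
          | false =>
            exact (hcore i).2.trans
              ((HP.adjA13 x y i).reachable.trans (HP.adjA15 hy).reachable)
    rw [SimpleGraph.connected_iff]
    exact ⟨fun u v => (hall u).symm.trans (hall v), ⟨(⟨0, hn0⟩, 0)⟩⟩
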